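/- (Proposition 1, two-point part, exact limiting form.) Let z be a random vector in ℝ^d whose coordinates are independent and identically distributed with mean 0, variance 1 and finite fourth moment, and set β := Var[z_1²]. Let g be a random vector in ℝ^d with finite second moments, independent of z. Define V_θ := (1/d) Σ_{i=1}^d Var[g_i] and S_θ := (1/d) Σ_{i=1}^d (E[g_i])². Then the average coordinate-wise variance of the estimator ⟨g, z⟩ z satisfies (1/d) Σ_{i=1}^d Var[(⟨g, z⟩ z)_i] = (d + β) V_θ + (d + β − 1) S_θ. -/

import Mathlib

open MeasureTheory ProbabilityTheory
open scoped BigOperators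

/-- **Proposition 1, two-point part, exact limiting form.**
For `z` with i.i.d. coordinates of mean `0`, variance `1` and finite fourth
moment, `β := Var[z₁²]`, and `g` with finite second moments independent of `z`,
setting `V_θ := (1/d) ∑_i Var[g_i]` and `S_θ := (1/d) ∑_i (E[g_i])²`, the average
coordinate-wise variance of `⟪g,z⟫ z` equals `(d+β) V_θ + (d+β-1) S_θ`. -/
theorem stmt7 {Ω : Type*} [MeasurableSpace Ω] {μ : Measure Ω} [IsProbabilityMeasure μ]
    {d : ℕ} (z g : Ω → Fin d → ℝ) (β : ℝ)
    (hzm : Measurable z) (hgm : Measurable g)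
    (hzindep : iIndepFun (fun i ω => z ω i) μ)
    (hzid : ∀ i j, IdentDistrib (fun ω => z ω i) (fun ω => z ω j) μ μ)
    (hmean : ∀ i, ∫ ω, z ω i ∂μ = 0)
    (hvar : ∀ i, variance (fun ω => z ω i) μ = 1)
    (hmom4 : ∀ i, MemLp (fun ω => z ω i) 4 μ)
    (hβ : ∀ i, variance (fun ω => (z ω i) ^ 2) μ = β)
    (hg2 : ∀ i, MemLp (fun ω => g ω i) 2 μ)
    (hindep : IndepFun g z μ) :
    (d : ℝ)⁻¹ * ∑ i, variance (fun ω => (∑ j, g ω j * z ω j) * z ω i) μ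
      = ((d : ℝ) + β) * ((d : ℝ)⁻¹ * ∑ i, variance (fun ω => g ω i) μ)
        + ((d : ℝ) + β - 1) * ((d : ℝ)⁻¹ * ∑ i, (∫ ω, g ω i ∂μ) ^ 2) := by
  classical
  have hzmi : ∀ i, Measurable fun ω => z ω i := fun i => (measurable_pi_apply i).comp hzm
  have hgmi : ∀ i, Measurable fun ω => g ω i := fun i => (measurable_pi_apply i).comp hgm
  -- Hölder helpers
  have hmul2 : ∀ {f h : Ω → ℝ}, MemLp f 2 μ → MemLp h 2 μ →
      Integrable (fun ω => f ω * h ω) μ := by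
    intro f h hf hh
    rw [← memLp_one_iff_integrable]
    have h12 : (1 : ENNReal) / 1 = 1 / 2 + 1 / 2 := by
      rw [one_div_one, ENNReal.add_halves]
    have : ENNReal.HolderTriple 2 2 1 := ⟨by simpa [one_div] using h12.symm⟩
    have := hh.smul (r := 1) hf
    simpa [smul_eq_mul, Pi.mul_def] using this
  have hmul4 : ∀ {f h : Ω → ℝ}, MemLp f 4 μ → MemLp h 4 μ →
      MemLp (fun ω => f ω * h ω) 2 μ := by
    intro f h hf hh
    have h24 : (1 : ENNReal) / 2 = 1 / 4 + 1 / 4 := by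
      rw [ENNReal.div_add_div_same,
        ENNReal.div_eq_div_iff (by norm_num) (by norm_num) (by norm_num) (by norm_num)]
      norm_num
    have : ENNReal.HolderTriple 4 4 2 := ⟨by simpa [one_div] using h24.symm⟩
    have := hh.smul (r := 2) hf
    simpa [smul_eq_mul, Pi.mul_def] using this
  have hz2 : ∀ i, MemLp (fun ω => z ω i) 2 μ := fun i =>
    (hmom4 i).mono_exponent (by norm_num)
  have hzsq2 : ∀ i, MemLp (fun ω => (z ω i) ^ 2) 2 μ := fun i => by
    have := hmul4 (hmom4 i) (hmom4 i)
    simpa [← pow_two] using this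
  -- basic moments of z
  have Ez2 : ∀ i, ∫ ω, (z ω i) ^ 2 ∂μ = 1 := by
    intro i
    have h2 : (1 : ℝ) = ∫ ω, (z ω i) ^ 2 ∂μ - (∫ ω, z ω i ∂μ) ^ 2 := by
      calc (1 : ℝ) = variance (fun ω => z ω i) μ := (hvar i).symm
        _ = μ[(fun ω => z ω i) ^ 2] - μ[fun ω => z ω i] ^ 2 := variance_eq_sub (hz2 i)
        _ = ∫ ω, (z ω i) ^ 2 ∂μ - (∫ ω, z ω i ∂μ) ^ 2 := rfl
    rw [hmean i] at h2
    have := h2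
    simp only [ne_eq, OfNat.ofNat_ne_zero, not_false_eq_true, zero_pow, sub_zero] at this
    linarith
  have Ez4 : ∀ i, ∫ ω, (z ω i) ^ 4 ∂μ = β + 1 := by
    intro i
    have h2 : β = ∫ ω, (z ω i) ^ 4 ∂μ - (∫ ω, (z ω i) ^ 2 ∂μ) ^ 2 := by
      calc β = variance (fun ω => (z ω i) ^ 2) μ := (hβ i).symm
        _ = μ[(fun ω => (z ω i) ^ 2) ^ 2] - μ[fun ω => (z ω i) ^ 2] ^ 2 :=
            variance_eq_sub (hzsq2 i)
        _ = (∫ ω, ((z ω i) ^ 2) ^ 2 ∂μ) - (∫ ω, (z ω i) ^ 2 ∂μ) ^ 2 := rfl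
        _ = (∫ ω, (z ω i) ^ 4 ∂μ) - (∫ ω, (z ω i) ^ 2 ∂μ) ^ 2 := by
            congr 1
            congr 1; ext ω; ring
    rw [Ez2 i] at h2
    linarith
  -- integrability of z-products appearing in the expansion
  have hzint : ∀ i j k, Integrable (fun ω => z ω j * z ω k * (z ω i) ^ 2) μ := by
    intro i j k
    by_cases hjk : j = k
    · subst hjk
      have := hmul2 (hzsq2 j) (hzsq2 i)
      exact this.congr (Filter.Eventually.of_forall fun ω => by ring)
    · by_cases hji : j = i
      · subst hji
        have h1 : Integrable (fun ω => z ω j * (z ω j) ^ 2) μ := hmul2 (hz2 j) (hzsq2 j)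
        have h2 : Integrable (fun ω => z ω k) μ := (hz2 k).integrable one_le_two
        have hI : IndepFun (fun ω => z ω j * (z ω j) ^ 2) (fun ω => z ω k) μ :=
          (hzindep.indepFun hjk).comp
            (measurable_id.mul (measurable_id.pow_const 2)) measurable_id
        exact (hI.integrable_mul h1 h2).congr
          (Filter.Eventually.of_forall fun ω => by simp only [Pi.mul_apply]; ring)
      · by_cases hki : k = i
        · subst hki
          have h1 : Integrable (fun ω => z ω k * (z ω k) ^ 2) μ := hmul2 (hz2 k) (hzsq2 k)
          have h2 : Integrable (fun ω => z ω j) μ := (hz2 j).integrable one_le_two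
          have hI : IndepFun (fun ω => z ω j) (fun ω => z ω k * (z ω k) ^ 2) μ :=
            (hzindep.indepFun hjk).comp measurable_id
              (measurable_id.mul (measurable_id.pow_const 2))
          exact (hI.integrable_mul h2 h1).congr
            (Filter.Eventually.of_forall fun ω => by simp only [Pi.mul_apply]; ring)
        · have hpair := hzindep.indepFun_prodMk hzmi j k i hji hki
          have hI : IndepFun (fun ω => z ω j * z ω k) (fun ω => (z ω i) ^ 2) μ :=
            hpair.comp (measurable_fst.mul measurable_snd) (measurable_id.pow_const 2)
          have h1 : Integrable (fun ω => z ω j * z ω k) μ := hmul2 (hz2 j) (hz2 k)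
          have h2 : Integrable (fun ω => (z ω i) ^ 2) μ := (hzsq2 i).integrable one_le_two
          exact hI.integrable_mul h1 h2
  -- values of z-moments
  have Mval : ∀ i j k, ∫ ω, z ω j * z ω k * (z ω i) ^ 2 ∂μ
      = (if j = k then (if j = i then β + 1 else 1) else 0) := by
    intro i j k
    by_cases hjk : j = k
    · subst hjk
      rw [if_pos rfl]
      by_cases hji : j = i
      · subst hji
        rw [if_pos rfl, ← Ez4 j]
        congr 1; ext ω; ring
      · rw [if_neg hji]
        have hI : IndepFun (fun ω => (z ω j) ^ 2) (fun ω => (z ω i) ^ 2) μ :=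
          (hzindep.indepFun hji).comp (measurable_id.pow_const 2) (measurable_id.pow_const 2)
        calc ∫ ω, z ω j * z ω j * (z ω i) ^ 2 ∂μ
            = ∫ ω, (z ω j) ^ 2 * (z ω i) ^ 2 ∂μ := by congr 1; ext ω; ring
          _ = (∫ ω, (z ω j) ^ 2 ∂μ) * ∫ ω, (z ω i) ^ 2 ∂μ :=
              hI.integral_fun_mul_eq_mul_integral (hzsq2 j).aestronglyMeasurable (hzsq2 i).aestronglyMeasurable
          _ = 1 := by rw [Ez2 j, Ez2 i, one_mul]
    · rw [if_neg hjk]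
      by_cases hji : j = i
      · subst hji
        have hkj : k ≠ j := fun h => hjk h.symm
        have hI : IndepFun (fun ω => z ω k) (fun ω => z ω j * (z ω j) ^ 2) μ :=
          (hzindep.indepFun hkj).comp measurable_id
            (measurable_id.mul (measurable_id.pow_const 2))
        calc ∫ ω, z ω j * z ω k * (z ω j) ^ 2 ∂μ
            = ∫ ω, z ω k * (z ω j * (z ω j) ^ 2) ∂μ := by congr 1; ext ω; ring
          _ = (∫ ω, z ω k ∂μ) * ∫ ω, z ω j * (z ω j) ^ 2 ∂μ :=
              hI.integral_fun_mul_eq_mul_integral (hzmi k).aestronglyMeasurable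
                ((hzmi j).mul ((hzmi j).pow_const 2)).aestronglyMeasurable
          _ = 0 := by rw [hmean k, zero_mul]
      · have hI : IndepFun (fun ω => z ω j) (fun ω => z ω k * (z ω i) ^ 2) μ := by
          by_cases hki : k = i
          · subst hki
            have hjk' : j ≠ k := hjk
            exact (hzindep.indepFun hjk').comp measurable_id
              (measurable_id.mul (measurable_id.pow_const 2))
          · have hpair := hzindep.indepFun_prodMk hzmi k i j
              (fun h => hjk h.symm) (fun h => hji h.symm)
            exact (hpair.comp (measurable_fst.mul (measurable_snd.pow_const 2))
              measurable_id).symm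
        calc ∫ ω, z ω j * z ω k * (z ω i) ^ 2 ∂μ
            = ∫ ω, z ω j * (z ω k * (z ω i) ^ 2) ∂μ := by congr 1; ext ω; ring
          _ = (∫ ω, z ω j ∂μ) * ∫ ω, z ω k * (z ω i) ^ 2 ∂μ :=
              hI.integral_fun_mul_eq_mul_integral (hzmi j).aestronglyMeasurable
                ((hzmi k).mul ((hzmi i).pow_const 2)).aestronglyMeasurable
          _ = 0 := by rw [hmean j, zero_mul]
  -- g products
  have Egg : ∀ j k, Integrable (fun ω => g ω j * g ω k) μ := fun j k =>
    hmul2 (hg2 j) (hg2 k)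
  have hGZ : ∀ i j k, IndepFun (fun ω => g ω j * g ω k)
      (fun ω => z ω j * z ω k * (z ω i) ^ 2) μ := by
    intro i j k
    exact hindep.comp
      (show Measurable fun v : Fin d → ℝ => v j * v k from
        (measurable_pi_apply j).mul (measurable_pi_apply k))
      (show Measurable fun v : Fin d → ℝ => v j * v k * (v i) ^ 2 from
        ((measurable_pi_apply j).mul (measurable_pi_apply k)).mul
          ((measurable_pi_apply i).pow_const 2))
  have hterm : ∀ i j k, Integrable
      (fun ω => (g ω j * g ω k) * (z ω j * z ω k * (z ω i) ^ 2)) μ := fun i j k =>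
    (hGZ i j k).integrable_mul (Egg j k) (hzint i j k)
  -- expansion of the square
  have hYsq : ∀ (i : Fin d) (ω : Ω), ((∑ j, g ω j * z ω j) * z ω i) ^ 2
      = ∑ j, ∑ k, (g ω j * g ω k) * (z ω j * z ω k * (z ω i) ^ 2) := by
    intro i ω
    have h1 : ((∑ j, g ω j * z ω j) * z ω i) ^ 2
        = (∑ j, ∑ k, (g ω j * z ω j) * (g ω k * z ω k)) * (z ω i) ^ 2 := by
      rw [← Finset.sum_mul_sum]; ring
    rw [h1, Finset.sum_mul]
    refine Finset.sum_congr rfl fun j _ => ?_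
    rw [Finset.sum_mul]
    exact Finset.sum_congr rfl fun k _ => by ring
  have hMem2 : ∀ i, MemLp (fun ω => (∑ j, g ω j * z ω j) * z ω i) 2 μ := by
    intro i
    have hm : Measurable fun ω => (∑ j, g ω j * z ω j) * z ω i :=
      (Finset.measurable_sum _ fun j _ => (hgmi j).mul (hzmi j)).mul (hzmi i)
    rw [memLp_two_iff_integrable_sq hm.aestronglyMeasurable]
    have h : (fun ω => ((∑ j, g ω j * z ω j) * z ω i) ^ 2)
        = fun ω => ∑ j, ∑ k, (g ω j * g ω k) * (z ω j * z ω k * (z ω i) ^ 2) :=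
      funext (hYsq i)
    rw [h]
    exact integrable_finset_sum _ fun j _ => integrable_finset_sum _ fun k _ => hterm i j k
  -- mean of the estimator
  have hEY : ∀ i, ∫ ω, (∑ j, g ω j * z ω j) * z ω i ∂μ = ∫ ω, g ω i ∂μ := by
    intro i
    have h1 : (fun ω => (∑ j, g ω j * z ω j) * z ω i)
        = fun ω => ∑ j, g ω j * (z ω j * z ω i) := by
      ext ω; rw [Finset.sum_mul]; exact Finset.sum_congr rfl fun j _ => by ring
    have hI : ∀ j : Fin d, IndepFun (fun ω => g ω j) (fun ω => z ω j * z ω i) μ := by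
      intro j
      exact hindep.comp
        (show Measurable fun v : Fin d → ℝ => v j from measurable_pi_apply j)
        (show Measurable fun v : Fin d → ℝ => v j * v i from
          (measurable_pi_apply j).mul (measurable_pi_apply i))
    have hint1 : ∀ j : Fin d, Integrable (fun ω => g ω j * (z ω j * z ω i)) μ := fun j =>
      (hI j).integrable_mul ((hg2 j).integrable one_le_two) (hmul2 (hz2 j) (hz2 i))
    rw [h1, integral_finset_sum _ fun j _ => hint1 j]
    have hjval : ∀ j : Fin d, ∫ ω, g ω j * (z ω j * z ω i) ∂μ
        = (∫ ω, g ω j ∂μ) * (∫ ω, z ω j * z ω i ∂μ) := fun j =>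
      (hI j).integral_fun_mul_eq_mul_integral
        (hgmi j).aestronglyMeasurable ((hzmi j).mul (hzmi i)).aestronglyMeasurable
    have hzz : ∀ j : Fin d, ∫ ω, z ω j * z ω i ∂μ = if j = i then 1 else 0 := by
      intro j
      by_cases hji : j = i
      · subst hji
        rw [if_pos rfl, ← Ez2 j]
        congr 1; ext ω; ring
      · rw [if_neg hji]
        have := (hzindep.indepFun hji).integral_fun_mul_eq_mul_integral
          (hzmi j).aestronglyMeasurable (hzmi i).aestronglyMeasurable
        rw [hmean j, zero_mul] at this
        exact this
    simp_rw [hjval, hzz]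
    simp
  -- second moment of the estimator
  have hEY2 : ∀ i, ∫ ω, ((∑ j, g ω j * z ω j) * z ω i) ^ 2 ∂μ
      = (∑ j, ∫ ω, (g ω j) ^ 2 ∂μ) + β * ∫ ω, (g ω i) ^ 2 ∂μ := by
    intro i
    have h0 : (fun ω => ((∑ j, g ω j * z ω j) * z ω i) ^ 2)
        = fun ω => ∑ j, ∑ k, (g ω j * g ω k) * (z ω j * z ω k * (z ω i) ^ 2) :=
      funext (hYsq i)
    calc ∫ ω, ((∑ j, g ω j * z ω j) * z ω i) ^ 2 ∂μ
        = ∫ ω, ∑ j, ∑ k, (g ω j * g ω k) * (z ω j * z ω k * (z ω i) ^ 2) ∂μ := by rw [h0]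
      _ = ∑ j, ∫ ω, ∑ k, (g ω j * g ω k) * (z ω j * z ω k * (z ω i) ^ 2) ∂μ :=
          integral_finset_sum _ fun j _ => integrable_finset_sum _ fun k _ => hterm i j k
      _ = ∑ j, ∑ k, (∫ ω, g ω j * g ω k ∂μ)
            * (if j = k then (if j = i then β + 1 else 1) else 0) := by
          refine Finset.sum_congr rfl fun j _ => ?_
          rw [integral_finset_sum _ fun k _ => hterm i j k]
          refine Finset.sum_congr rfl fun k _ => ?_
          calc ∫ ω, (g ω j * g ω k) * (z ω j * z ω k * (z ω i) ^ 2) ∂μ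
              = (∫ ω, g ω j * g ω k ∂μ) * ∫ ω, z ω j * z ω k * (z ω i) ^ 2 ∂μ :=
                (hGZ i j k).integral_fun_mul_eq_mul_integral (Egg j k).aestronglyMeasurable
                  (hzint i j k).aestronglyMeasurable
            _ = _ := by rw [Mval i j k]
      _ = ∑ j, (∫ ω, (g ω j) ^ 2 ∂μ) * (if j = i then β + 1 else 1) := by
          refine Finset.sum_congr rfl fun j _ => ?_
          rw [Finset.sum_eq_single j]
          · rw [if_pos rfl]
            congr 1
            congr 1; ext ω; ring
          · intro k _ hkj
            rw [if_neg (fun h => hkj h.symm), mul_zero]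
          · intro h; exact absurd (Finset.mem_univ j) h
      _ = (∑ j, ∫ ω, (g ω j) ^ 2 ∂μ) + β * ∫ ω, (g ω i) ^ 2 ∂μ := by
          have hsplit : ∀ j : Fin d, (∫ ω, (g ω j) ^ 2 ∂μ) * (if j = i then β + 1 else 1)
              = (∫ ω, (g ω j) ^ 2 ∂μ)
                + (if j = i then β * ∫ ω, (g ω j) ^ 2 ∂μ else 0) := by
            intro j
            by_cases h : j = i
            · rw [if_pos h, if_pos h]; ring
            · rw [if_neg h, if_neg h]; ring
          simp_rw [hsplit]
          rw [Finset.sum_add_distrib, Finset.sum_ite_eq' Finset.univ i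
            (fun j => β * ∫ ω, (g ω j) ^ 2 ∂μ)]
          simp
  -- variance of each coordinate of the estimator
  have key : ∀ i, variance (fun ω => (∑ j, g ω j * z ω j) * z ω i) μ
      = (∑ j, ∫ ω, (g ω j) ^ 2 ∂μ) + β * (∫ ω, (g ω i) ^ 2 ∂μ)
        - (∫ ω, g ω i ∂μ) ^ 2 := by
    intro i
    calc variance (fun ω => (∑ j, g ω j * z ω j) * z ω i) μ
        = μ[(fun ω => (∑ j, g ω j * z ω j) * z ω i) ^ 2]
          - μ[fun ω => (∑ j, g ω j * z ω j) * z ω i] ^ 2 := variance_eq_sub (hMem2 i)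
      _ = (∫ ω, ((∑ j, g ω j * z ω j) * z ω i) ^ 2 ∂μ)
          - (∫ ω, (∑ j, g ω j * z ω j) * z ω i ∂μ) ^ 2 := rfl
      _ = _ := by rw [hEY2 i, hEY i]
  -- second moment of g in terms of variance and mean
  have Eg2 : ∀ i, ∫ ω, (g ω i) ^ 2 ∂μ
      = variance (fun ω => g ω i) μ + (∫ ω, g ω i ∂μ) ^ 2 := by
    intro i
    have h2 : variance (fun ω => g ω i) μ
        = ∫ ω, (g ω i) ^ 2 ∂μ - (∫ ω, g ω i ∂μ) ^ 2 := by
      calc variance (fun ω => g ω i) μ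
          = μ[(fun ω => g ω i) ^ 2] - μ[fun ω => g ω i] ^ 2 := variance_eq_sub (hg2 i)
        _ = ∫ ω, (g ω i) ^ 2 ∂μ - (∫ ω, g ω i ∂μ) ^ 2 := rfl
    linarith
  have key' : ∀ i, variance (fun ω => (∑ j, g ω j * z ω j) * z ω i) μ
      = ((∑ j, variance (fun ω => g ω j) μ) + ∑ j, (∫ ω, g ω j ∂μ) ^ 2)
        + β * (variance (fun ω => g ω i) μ + (∫ ω, g ω i ∂μ) ^ 2)
        - (∫ ω, g ω i ∂μ) ^ 2 := by
    intro i
    rw [key i, Eg2 i]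
    congr 1
    congr 1
    simp_rw [Eg2]
    exact Finset.sum_add_distrib
  rw [Finset.sum_congr rfl fun i _ => key' i]
  rw [Finset.sum_sub_distrib, Finset.sum_add_distrib, Finset.sum_const,
    ← Finset.mul_sum, Finset.sum_add_distrib, Finset.card_univ, Fintype.card_fin,
    nsmul_eq_mul]
  ring
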